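/- Let R be a reduced ring (R has no nonzero nilpotent elements) and n ≥ 1. The full matrix ring M_n(R) is strongly unit nil-clean if and only if R is unit-regular. -/

import Mathlib

/-- An element `x` of a ring is *strongly nil-clean* if `x = e + b` where `e` is an
idempotent, `b` is nilpotent, and `e` and `b` commute. -/
def IsStronglyNilClean {R : Type*} [Ring R] (x : R) : Prop :=
  ∃ e b : R, IsIdempotentElem e ∧ IsNilpotent b ∧ e * b = b * e ∧ x = e + b

/-- A ring `R` is *strongly unit nil-clean* if for every `x : R` there is a unit `u`
such that `u * x` is strongly nil-clean. -/
def StronglyUnitNilClean (R : Type*) [Ring R] : Prop :=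
  ∀ x : R, ∃ u : Rˣ, IsStronglyNilClean ((u : R) * x)

/-- A ring `R` is *unit-regular* if every `a : R` satisfies `a = a * u * a` for some unit `u`. -/
def UnitRegular (R : Type*) [Ring R] : Prop :=
  ∀ a : R, ∃ u : Rˣ, a = a * (u : R) * a

/-- A group is *locally finite* if every finitely generated subgroup is finite. -/
def LocallyFiniteGroup (G : Type*) [Group G] : Prop :=
  ∀ H : Subgroup G, H.FG → (H : Set G).Finite

/-- A subset `T` of a ring is *nilpotent* if there is `n ≥ 1` such that every product of
`n` elements of `T` is zero. -/
def IsNilpotentSubset {R : Type*} [Ring R] (T : Set R) : Prop :=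
  ∃ n : ℕ, 0 < n ∧ ∀ l : List R, (∀ a ∈ l, a ∈ T) → l.length = n → l.prod = 0

/-- A subset `S` of a ring is *locally nilpotent* if the non-unital subring generated by
any finite subset of `S` is nilpotent. -/
def IsLocallyNilpotentSet {R : Type*} [Ring R] (S : Set R) : Prop :=
  ∀ F : Finset R, (F : Set R) ⊆ S →
    IsNilpotentSubset ((NonUnitalSubring.closure (F : Set R) : Set R))

/-- A ring is *NI* if the set of nilpotent elements forms a two-sided ideal. -/
def IsNIRing (R : Type*) [Ring R] : Prop :=
  ∃ I : TwoSidedIdeal R, ∀ x : R, x ∈ I ↔ IsNilpotent x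

/-- A ring is *weakly 2-primal* if its set of nilpotent elements is a two-sided ideal
which is moreover locally nilpotent. -/
def Weakly2Primal (R : Type*) [Ring R] : Prop :=
  IsNIRing R ∧ IsLocallyNilpotentSet {x : R | IsNilpotent x}


section Reduced
variable {R : Type*} [Ring R] [IsReduced R]

lemma sq_zero_eq_zero {a : R} (h : a * a = 0) : a = 0 :=
  IsReduced.eq_zero a ⟨2, by rw [pow_two]; exact h⟩

lemma ann_symm {a z : R} (h : a * z = 0) : z * a = 0 := by
  apply sq_zero_eq_zero
  calc z * a * (z * a) = z * (a * z) * a := by noncomm_ring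
    _ = 0 := by rw [h]; noncomm_ring

lemma idem_central {e : R} (he : e * e = e) (r : R) : e * r = r * e := by
  have h1 : e * r = e * r * e := by
    have hse : (r - r * e) * e = 0 := by
      calc (r - r * e) * e = r * e - r * (e * e) := by noncomm_ring
        _ = 0 := by rw [he]; noncomm_ring
    have key : (e * (r - r * e)) * (e * (r - r * e)) = 0 := by
      calc (e * (r - r * e)) * (e * (r - r * e)) = e * ((r - r * e) * e) * (r - r * e) := by
            noncomm_ring
        _ = 0 := by rw [hse]; noncomm_ring
    have h0 := sq_zero_eq_zero key
    have : e * r - e * r * e = 0 := by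
      calc e * r - e * r * e = e * (r - r * e) := by noncomm_ring
        _ = 0 := h0
    rwa [sub_eq_zero] at this
  have h2 : r * e = e * r * e := by
    have hse : e * (r - e * r) = 0 := by
      calc e * (r - e * r) = e * r - (e * e) * r := by noncomm_ring
        _ = 0 := by rw [he]; noncomm_ring
    have key : ((r - e * r) * e) * ((r - e * r) * e) = 0 := by
      calc ((r - e * r) * e) * ((r - e * r) * e) = (r - e * r) * (e * (r - e * r)) * e := by
            noncomm_ring
        _ = 0 := by rw [hse]; noncomm_ring
    have h0 := sq_zero_eq_zero key
    have : r * e - e * r * e = 0 := by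
      calc r * e - e * r * e = (r - e * r) * e := by noncomm_ring
        _ = 0 := h0
    rwa [sub_eq_zero] at this
  rw [h1, h2]

/-- In a reduced ring, a (von Neumann) regular element is unit-regular. -/
lemma unit_regular_of_regular {a x : R} (hx : a * x * a = a) : ∃ u : Rˣ, a = a * (u : R) * a := by
  obtain ⟨x', hx'def⟩ : ∃ x', x' = x * a * x := ⟨_, rfl⟩
  have h1 : a * x' * a = a := by
    rw [hx'def]
    calc a * (x * a * x) * a = (a * x * a) * (x * a) := by noncomm_ring
      _ = a * (x * a) := by rw [hx]
      _ = a := by rw [← mul_assoc, hx]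
  have hxa : x' * a * x' = x' := by
    rw [hx'def]
    calc x * a * x * a * (x * a * x) = x * ((a * x * a) * (x * (a * x))) := by noncomm_ring
      _ = x * (a * (x * (a * x))) := by rw [hx]
      _ = x * ((a * x * a) * x) := by noncomm_ring
      _ = x * (a * x) := by rw [hx]
      _ = x * a * x := by noncomm_ring
  clear hx hx'def
  obtain ⟨e, hedef⟩ : ∃ e, e = a * x' := ⟨_, rfl⟩
  obtain ⟨f, hfdef⟩ : ∃ f, f = x' * a := ⟨_, rfl⟩
  have he : e * e = e := by rw [hedef]; calc a * x' * (a * x') = (a * x' * a) * x' := by noncomm_ring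
                                            _ = a * x' := by rw [h1]
  have hf : f * f = f := by rw [hfdef]; calc x' * a * (x' * a) = (x' * a * x') * a := by noncomm_ring
                                            _ = x' * a := by rw [hxa]
  have hec := idem_central he
  have hfc := idem_central hf
  have hea : e * a = a := by rw [hedef, mul_assoc]; rw [← mul_assoc]; exact h1
  have haf : a * f = a := by rw [hfdef, ← mul_assoc]; exact h1
  have hxe : x' * e = x' := by rw [hedef, ← mul_assoc]; exact hxa
  have hfe : f * e = e := by
    calc f * e = f * (a * x') := by rw [hedef]
      _ = (f * a) * x' := by rw [mul_assoc]
      _ = (a * f) * x' := by rw [hfc a]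
      _ = a * x' := by rw [haf]
      _ = e := hedef.symm
  have hef : e * f = f := by
    calc e * f = e * (x' * a) := by rw [hfdef]
      _ = (e * x') * a := by rw [mul_assoc]
      _ = (x' * e) * a := by rw [hec x']
      _ = x' * a := by rw [hxe]
      _ = f := hfdef.symm
  have hefe : e = f := by
    have h3 : e * f = f * e := hec f
    rw [hef, hfe] at h3
    exact h3.symm
  have hex : e * x' = x' := by rw [hec x']; exact hxe
  have hae : a * e = a := by rw [← hec a]; exact hea
  refine ⟨⟨x' + 1 - e, a + 1 - e, ?_, ?_⟩, ?_⟩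
  · show (x' + 1 - e) * (a + 1 - e) = 1
    have expand : (x' + 1 - e) * (a + 1 - e)
        = x' * a + x' - (x' * e) + a + 1 - e - (e * a) - e + e * e := by noncomm_ring
    rw [expand, ← hfdef, he, hxe, hea, hefe]
    noncomm_ring
  · show (a + 1 - e) * (x' + 1 - e) = 1
    have expand : (a + 1 - e) * (x' + 1 - e)
        = a * x' + a - (a * e) + x' + 1 - e - (e * x') - e + e * e := by noncomm_ring
    rw [expand, ← hedef, he, hae, hex]
    noncomm_ring
  · show a = a * (x' + 1 - e) * a
    have expand : a * (x' + 1 - e) * a = a * x' * a + a * a - a * (e * a) := by noncomm_ring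
    rw [expand, h1, hea]
    noncomm_ring

end Reduced

section MP

variable {R : Type*} [Ring R] [IsReduced R] {n : ℕ}

abbrev MM (R : Type*) [Ring R] (n : ℕ) := Matrix (Fin n) (Fin n) R

lemma regular_of_sunc (hn : 1 ≤ n) (a : R)
    (h : ∃ u : (MM R n)ˣ, ∃ e b : MM R n,
      e * e = e ∧ IsNilpotent b ∧ e * b = b * e ∧ u.val * Matrix.diagonal
        (fun i => if i = (⟨0, hn⟩ : Fin n) then a else 1) = e + b) :
    ∃ x : R, a * x * a = a := by
  classical
  obtain ⟨u, e, b, he, hb, hcomm, heq⟩ := h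
  set z : Fin n := ⟨0, hn⟩ with hz
  set d : Fin n → R := fun i => if i = z then a else 1 with hd
  set A : MM R n := Matrix.diagonal d with hA
  set T : MM R n := u.val * A with hT
  have hdz : d z = a := by rw [hd]; simp
  -- T - T*T is nilpotent
  have hnil : IsNilpotent (T - T * T) := by
    have hTeb : T = e + b := heq
    have hfac : T - T * T = b * (1 - e - e - b) := by
      rw [hTeb]
      have h0 : (e + b) - (e + b) * (e + b) = b - e * b - b * e - b * b + (e - e * e) := by
        noncomm_ring
      rw [h0, he, hcomm]
      noncomm_ring
    rw [hfac]
    have hbe : Commute b e := hcomm.symm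
    have hcb : Commute b (1 - e - e - b) :=
      (((Commute.one_right b).sub_right hbe).sub_right hbe).sub_right (Commute.refl b)
    exact hcb.isNilpotent_mul_right hb
  obtain ⟨k, hk1, hk⟩ : ∃ k, 1 ≤ k ∧ (T - T * T) ^ k = 0 := by
    obtain ⟨k0, hk0⟩ := hnil
    exact ⟨k0 + 1, Nat.le_add_left 1 k0, by rw [pow_succ, hk0, zero_mul]⟩
  have hc1 : Commute T (1 - T) := (Commute.one_right T).sub_right (Commute.refl T)
  have hTTk : T ^ k * (1 - T) ^ k = 0 := by
    rw [← hc1.mul_pow]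
    have h0 : T * (1 - T) = T - T * T := by noncomm_ring
    rw [h0, hk]
  set f : ℕ → MM R n := fun i => T ^ i * (1 - T) ^ (2 * k - i) * ((2 * k).choose i : MM R n)
    with hf
  have hbin : (1 : MM R n) = ∑ i ∈ Finset.range (2 * k + 1), f i := by
    have h0 := hc1.add_pow (2 * k)
    rw [add_sub_cancel, one_pow] at h0
    exact h0
  set β : MM R n := ∑ i ∈ Finset.range (k + 1), f i with hβ
  set α : MM R n := ∑ i ∈ Finset.Ico (k + 1) (2 * k + 1), f i with hα
  have hsplit : β + α = 1 := by
    rw [hβ, hα, Finset.range_eq_Ico]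
    rw [Finset.sum_Ico_consecutive f (by omega) (by omega)]
    rw [hbin, Finset.range_eq_Ico]
  -- T^k * β = 0
  have hTkβ : T ^ k * β = 0 := by
    rw [hβ, Finset.mul_sum]
    apply Finset.sum_eq_zero
    intro i hi
    have hik : i ≤ k := Nat.lt_succ_iff.mp (Finset.mem_range.mp hi)
    have h2k : 2 * k - i = (k - i) + k := by omega
    have c2 : Commute (T ^ k) ((1 - T) ^ (k - i)) := hc1.pow_pow k (k - i)
    calc T ^ k * f i = T ^ k * (T ^ i * (1 - T) ^ ((k - i) + k) * ((2 * k).choose i : MM R n)) := by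
          rw [hf]; simp only [h2k]
      _ = T ^ k * T ^ i * (1 - T) ^ (k - i) * (1 - T) ^ k * ((2 * k).choose i : MM R n) := by
          rw [pow_add]; simp only [mul_assoc]
      _ = T ^ i * (T ^ k * (1 - T) ^ (k - i)) * (1 - T) ^ k * ((2 * k).choose i : MM R n) := by
          rw [← pow_add, Nat.add_comm k i, pow_add]; simp only [mul_assoc]
      _ = T ^ i * ((1 - T) ^ (k - i) * T ^ k) * (1 - T) ^ k * ((2 * k).choose i : MM R n) := by
          rw [c2.eq]
      _ = T ^ i * (1 - T) ^ (k - i) * (T ^ k * (1 - T) ^ k) * ((2 * k).choose i : MM R n) := by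
          simp only [mul_assoc]
      _ = 0 := by rw [hTTk]; simp
  -- α = T^(k+1) * G
  set G : MM R n := ∑ i ∈ Finset.Ico (k + 1) (2 * k + 1),
      T ^ (i - (k + 1)) * (1 - T) ^ (2 * k - i) * ((2 * k).choose i : MM R n) with hG
  have hαG : α = T ^ (k + 1) * G := by
    rw [hα, hG, Finset.mul_sum]
    apply Finset.sum_congr rfl
    intro i hi
    have hik : k + 1 ≤ i := (Finset.mem_Ico.mp hi).1
    have hexp : k + 1 + (i - (k + 1)) = i := by omega
    rw [hf]
    simp only [← mul_assoc, ← pow_add, hexp]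
  have hcommTα : Commute T α := by
    rw [hα]
    apply Commute.sum_right
    intro i _
    exact (((Commute.refl T).pow_right i).mul_right (hc1.pow_right _)).mul_right
      (Nat.cast_commute _ _).symm
  have hcommTβ : Commute T β := by
    rw [hβ]
    apply Commute.sum_right
    intro i _
    exact (((Commute.refl T).pow_right i).mul_right (hc1.pow_right _)).mul_right
      (Nat.cast_commute _ _).symm
  -- the key matrix identity
  set Y : MM R n := T ^ k * G * u.val with hY
  have huinvT : u⁻¹.val * T = A := by
    rw [hT, ← mul_assoc, Units.inv_mul, one_mul]
  have hAuT : A = u⁻¹.val * T := huinvT.symm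
  have key : A - A * Y * A = A * β := by
    have h1 : A * Y * A = u⁻¹.val * (α * T) := by
      rw [hAuT, hY]
      calc u⁻¹.val * T * (T ^ k * G * u.val) * (u⁻¹.val * T)
          = u⁻¹.val * (T * T ^ k * G) * (u.val * u⁻¹.val) * T := by
            simp only [mul_assoc]
        _ = u⁻¹.val * (T * T ^ k * G) * T := by rw [Units.mul_inv, mul_one]
        _ = u⁻¹.val * (T ^ (k + 1) * G) * T := by rw [pow_succ']
        _ = u⁻¹.val * α * T := by rw [hαG]
        _ = u⁻¹.val * (α * T) := by simp only [mul_assoc]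
    have h2 : A * β = u⁻¹.val * (T * β) := by
      rw [hAuT]; simp only [mul_assoc]
    rw [h1, h2, hAuT]
    calc u⁻¹.val * T - u⁻¹.val * (α * T) = u⁻¹.val * (T - α * T) := by noncomm_ring
      _ = u⁻¹.val * (T * β) := by
        congr 1
        have h3 : T = T * (β + α) := by rw [hsplit, mul_one]
        rw [← hcommTα.eq]
        calc T - T * α = T * (β + α) - T * α := by rw [← h3]
          _ = T * β := by noncomm_ring
  -- kernel lemma
  have klemma : ∀ m (v : Fin n → R), (T ^ m).mulVec v = 0 → ∀ j, v j * a = 0 := by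
    intro m
    induction m with
    | zero =>
      intro v hv j
      rw [pow_zero, Matrix.one_mulVec] at hv
      rw [congrFun hv j]
      exact zero_mul a
    | succ m ih =>
      intro v hv
      have hTv : ∀ j, (T.mulVec v) j * a = 0 := by
        apply ih
        rw [Matrix.mulVec_mulVec, ← pow_succ]
        exact hv
      have hAv : ∀ j, (A.mulVec v) j * a = 0 := by
        have hAvT : A.mulVec v = (u⁻¹.val).mulVec (T.mulVec v) := by
          rw [Matrix.mulVec_mulVec, huinvT]
        intro j
        rw [hAvT]
        show (∑ l, u⁻¹.val j l * (T.mulVec v) l) * a = 0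
        rw [Finset.sum_mul]
        apply Finset.sum_eq_zero
        intro l _
        rw [mul_assoc, hTv l, mul_zero]
      intro j
      by_cases hjz : j = z
      · have hdj : d j = a := by simp [hd, hjz]
        have h0 : a * v j * a = 0 := by
          have := hAv j
          rwa [Matrix.mulVec_diagonal, hdj] at this
        apply sq_zero_eq_zero
        calc v j * a * (v j * a) = v j * (a * v j * a) := by noncomm_ring
          _ = 0 := by rw [h0, mul_zero]
      · have hdj : d j = 1 := by simp [hd, hjz]
        have := hAv j
        rwa [Matrix.mulVec_diagonal, hdj, one_mul] at this
  -- conclude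
  have hβz : β z z * a = 0 := by
    have hvec : (T ^ k).mulVec (fun j => β j z) = 0 := by
      have hcol : (fun j => β j z) = β.mulVec (Pi.single z 1) := by
        funext j
        simp [Matrix.mulVec_single]
      rw [hcol, Matrix.mulVec_mulVec, hTkβ, Matrix.zero_mulVec]
    exact klemma k _ hvec z
  have haβ : a * β z z = 0 := ann_symm hβz
  have hentry : a - a * Y z z * a = a * β z z := by
    have h1 := congrFun (congrFun key z) z
    rw [Matrix.sub_apply] at h1
    have hAzz : A z z = a := by rw [hA, Matrix.diagonal_apply_eq, hdz]
    have hAYA : (A * Y * A) z z = a * Y z z * a := by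
      rw [hA, Matrix.mul_diagonal, Matrix.diagonal_mul, hdz]
    have hAβ : (A * β) z z = a * β z z := by
      rw [hA, Matrix.diagonal_mul, hdz]
    rw [hAzz, hAYA, hAβ] at h1
    exact h1
  refine ⟨Y z z, ?_⟩
  rw [haβ, sub_eq_zero] at hentry
  exact hentry.symm

end MP


namespace SUNC
variable {R : Type*} [Ring R] {n : ℕ}

lemma central_mul_smul {m : ℕ} {h : R} (hc : ∀ r, h * r = r * h)
    (X : Matrix (Fin m) (Fin m) R) (Y : Matrix (Fin m) (Fin m) R) :
    X * (h • Y) = h • (X * Y) := by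
  ext i j
  simp only [Matrix.mul_apply, Matrix.smul_apply, smul_eq_mul, Finset.mul_sum]
  apply Finset.sum_congr rfl
  intro k _
  rw [← mul_assoc, ← hc (X i k), mul_assoc]

lemma smul_mul_mat {m : ℕ} (h : R) (X Y : Matrix (Fin m) (Fin m) R) :
    (h • X) * Y = h • (X * Y) := Matrix.smul_mul h X Y

def blk (a : R) (X : Matrix (Fin n) (Fin n) R) : Matrix (Fin (n+1)) (Fin (n+1)) R :=
  Matrix.of fun i j =>
    Fin.cases (Fin.cases a (fun _ => 0) j) (fun i' => Fin.cases 0 (fun j' => X i' j') j) i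

@[simp] lemma blk_00 (a : R) (X : Matrix (Fin n) (Fin n) R) : blk a X 0 0 = a := rfl

@[simp] lemma blk_0succ (a : R) (X : Matrix (Fin n) (Fin n) R) (j : Fin n) :
    blk a X 0 j.succ = 0 := by simp [blk]

@[simp] lemma blk_succ0 (a : R) (X : Matrix (Fin n) (Fin n) R) (i : Fin n) :
    blk a X i.succ 0 = 0 := by simp [blk]

@[simp] lemma blk_succsucc (a : R) (X : Matrix (Fin n) (Fin n) R) (i j : Fin n) :
    blk a X i.succ j.succ = X i j := by simp [blk]

lemma blk_mul (a b : R) (X Y : Matrix (Fin n) (Fin n) R) :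
    blk a X * blk b Y = blk (a * b) (X * Y) := by
  ext i j
  rw [Matrix.mul_apply, Fin.sum_univ_succ]
  induction i using Fin.cases with
  | zero =>
    induction j using Fin.cases with
    | zero => simp
    | succ j => simp
  | succ i =>
    induction j using Fin.cases with
    | zero => simp
    | succ j => simp [Matrix.mul_apply]

lemma blk_smul (h a : R) (X : Matrix (Fin n) (Fin n) R) :
    h • blk a X = blk (h * a) (h • X) := by
  ext i j
  induction i using Fin.cases with
  | zero =>
    induction j using Fin.cases with
    | zero => simp
    | succ j => simp
  | succ i =>
    induction j using Fin.cases with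
    | zero => simp
    | succ j => simp

lemma blk_one : (1 : Matrix (Fin (n+1)) (Fin (n+1)) R) = blk 1 1 := by
  ext i j
  induction i using Fin.cases with
  | zero =>
    induction j using Fin.cases with
    | zero => simp
    | succ j => simp [Matrix.one_apply, (Fin.succ_ne_zero j).symm]
  | succ i =>
    induction j using Fin.cases with
    | zero => simp [Matrix.one_apply, Fin.succ_ne_zero i]
    | succ j => simp [Matrix.one_apply, Fin.succ_inj]

lemma blk_smul_one (h : R) :
    h • (1 : Matrix (Fin (n+1)) (Fin (n+1)) R) = blk h (h • 1) := by
  rw [blk_one, blk_smul, mul_one]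

lemma perm_mul {m : ℕ} (σ : Equiv.Perm (Fin m)) (X : Matrix (Fin m) (Fin m) R) :
    ((1 : Matrix (Fin m) (Fin m) R).submatrix σ id) * X = X.submatrix σ id := by
  ext i j
  simp only [Matrix.mul_apply, Matrix.submatrix_apply, id_eq, Matrix.one_apply]
  simp [Finset.sum_ite_eq, ite_mul]

lemma mul_perm {m : ℕ} (τ : Equiv.Perm (Fin m)) (X : Matrix (Fin m) (Fin m) R) :
    X * ((1 : Matrix (Fin m) (Fin m) R).submatrix id τ) = X.submatrix id τ := by
  ext i j
  simp only [Matrix.mul_apply, Matrix.submatrix_apply, id_eq, Matrix.one_apply]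
  simp [Finset.sum_ite_eq', mul_ite]

lemma swap_perm_sq {m : ℕ} (a b : Fin m) :
    ((1 : Matrix (Fin m) (Fin m) R).submatrix (Equiv.swap a b) id) *
      ((1 : Matrix (Fin m) (Fin m) R).submatrix (Equiv.swap a b) id) = 1 := by
  rw [perm_mul]
  ext i j
  rw [Matrix.submatrix_apply, id_eq, Matrix.submatrix_apply, Equiv.swap_apply_self, id_eq]

lemma swap_perm_sq' {m : ℕ} (a b : Fin m) :
    ((1 : Matrix (Fin m) (Fin m) R).submatrix id (Equiv.swap a b)) *
      ((1 : Matrix (Fin m) (Fin m) R).submatrix id (Equiv.swap a b)) = 1 := by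
  rw [mul_perm]
  ext i j
  rw [Matrix.submatrix_apply, id_eq, Matrix.submatrix_apply, Equiv.swap_apply_self, id_eq]

/-- The statement of the diagonal-reduction claim for size `m`. -/
def Claim (R : Type*) [Ring R] (m : ℕ) : Prop :=
  ∀ (g : R), (∀ r, g * r = r * g) → g * g = g →
    ∀ A : Matrix (Fin m) (Fin m) R, g • A = A →
      ∃ E W W' : Matrix (Fin m) (Fin m) R,
        E * E = E ∧ g • E = E ∧ g • W = W ∧ g • W' = W' ∧
        W * W' = g • 1 ∧ W' * W = g • 1 ∧ A = E * W

lemma atom_step (h : R) (hc : ∀ r, h * r = r * h) (hid : h * h = h)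
    (IH : Claim R n)
    (B : Matrix (Fin (n+1)) (Fin (n+1)) R)
    (hB : h • B = B)
    (hform : ∀ i j, B i j = 0 ∨ ∃ w : Rˣ, B i j = h * ↑w) :
    ∃ E W W' : Matrix (Fin (n+1)) (Fin (n+1)) R,
      E * E = E ∧ h • E = E ∧ h • W = W ∧ h • W' = W' ∧
      W * W' = h • 1 ∧ W' * W = h • 1 ∧ B = E * W := by
  classical
  have hBe : ∀ i j, h * B i j = B i j := by
    intro i j
    have := congrFun (congrFun hB i) j
    simpa using this
  have hsmul_one_mul : ∀ (Z : Matrix (Fin (n+1)) (Fin (n+1)) R), h • Z = Z →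
      (h • (1 : Matrix (Fin (n+1)) (Fin (n+1)) R)) * Z = Z := by
    intro Z hZ
    rw [smul_mul_mat, one_mul, hZ]
  have hmul_smul_one : ∀ (Z : Matrix (Fin (n+1)) (Fin (n+1)) R), h • Z = Z →
      Z * (h • (1 : Matrix (Fin (n+1)) (Fin (n+1)) R)) = Z := by
    intro Z hZ
    rw [central_mul_smul hc, mul_one, hZ]
  by_cases hall : ∀ i j, B i j = 0
  · -- B = 0
    have hB0 : B = 0 := by ext i j; exact hall i j
    refine ⟨0, h • 1, h • 1, by rw [mul_zero], by rw [smul_zero], ?_, ?_, ?_, ?_, ?_⟩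
    · rw [smul_smul, hid]
    · rw [smul_smul, hid]
    · exact hsmul_one_mul _ (by rw [smul_smul, hid])
    · exact hsmul_one_mul _ (by rw [smul_smul, hid])
    · rw [hB0, zero_mul]
  · push_neg at hall
    obtain ⟨i₀, j₀, hne⟩ := hall
    obtain ⟨w, hw⟩ : ∃ w : Rˣ, B i₀ j₀ = h * ↑w := (hform i₀ j₀).resolve_left hne
    obtain ⟨σ, hσ⟩ : ∃ _x : Equiv.Perm (Fin (n+1)), _x = Equiv.swap i₀ 0 := ⟨_, rfl⟩
    obtain ⟨τ, hτ⟩ : ∃ _x : Equiv.Perm (Fin (n+1)), _x = Equiv.swap j₀ 0 := ⟨_, rfl⟩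
    obtain ⟨B', hB'def⟩ : ∃ _x : Matrix (Fin (n+1)) (Fin (n+1)) R, _x = B.submatrix σ τ := ⟨_, rfl⟩
    have hB'e : ∀ i j, h * B' i j = B' i j := fun i j => by
      rw [hB'def, Matrix.submatrix_apply]; exact hBe _ _
    have hB's : h • B' = B' := by ext i j; simpa using hB'e i j
    obtain ⟨c, hcdef⟩ : ∃ _x : R, _x = h * ↑w := ⟨_, rfl⟩
    obtain ⟨c', hc'def⟩ : ∃ _x : R, _x = h * ↑w⁻¹ := ⟨_, rfl⟩
    have hcc' : c * c' = h := by
      rw [hcdef, hc'def]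
      calc h * ↑w * (h * ↑w⁻¹) = h * (↑w * h) * ↑w⁻¹ := by noncomm_ring
        _ = h * (h * ↑w) * ↑w⁻¹ := by rw [← hc ↑w]
        _ = (h * h) * (↑w * ↑w⁻¹) := by noncomm_ring
        _ = h := by rw [hid, Units.mul_inv, mul_one]
    have hc'c : c' * c = h := by
      rw [hcdef, hc'def]
      calc h * ↑w⁻¹ * (h * ↑w) = h * (↑w⁻¹ * h) * ↑w := by noncomm_ring
        _ = h * (h * ↑w⁻¹) * ↑w := by rw [← hc ↑w⁻¹]
        _ = (h * h) * (↑w⁻¹ * ↑w) := by noncomm_ring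
        _ = h := by rw [hid, Units.inv_mul, mul_one]
    have hhc : h * c = c := by rw [hcdef, ← mul_assoc, hid]
    have hhc' : h * c' = c' := by rw [hc'def, ← mul_assoc, hid]
    have hB'00 : B' 0 0 = c := by
      rw [hB'def, Matrix.submatrix_apply, hσ, hτ, Equiv.swap_apply_right,
        Equiv.swap_apply_right, hw, hcdef]
    -- elimination matrices
    set C : Matrix (Fin (n+1)) (Fin (n+1)) R :=
      Matrix.of (fun i k => if k = 0 ∧ i ≠ 0 then B' i 0 * c' else 0) with hCdef
    set D : Matrix (Fin (n+1)) (Fin (n+1)) R :=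
      Matrix.of (fun k j => if k = 0 ∧ j ≠ 0 then c' * B' 0 j else 0) with hDdef
    have hCapp : ∀ i k, C i k = if k = 0 ∧ i ≠ 0 then B' i 0 * c' else 0 := fun i k => by
      rw [hCdef]; rfl
    have hDapp : ∀ k j, D k j = if k = 0 ∧ j ≠ 0 then c' * B' 0 j else 0 := fun k j => by
      rw [hDdef]; rfl
    have hCX : ∀ (X : Matrix (Fin (n+1)) (Fin (n+1)) R) i j,
        (C * X) i j = if i ≠ 0 then B' i 0 * c' * X 0 j else 0 := by
      intro X i j
      rw [Matrix.mul_apply]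
      rw [Finset.sum_eq_single 0]
      · rw [hCapp]
        by_cases hi : i = 0
        · simp [hi]
        · simp [hi]
      · intro k _ hk
        rw [hCapp, if_neg (by tauto), zero_mul]
      · intro habs; exact absurd (Finset.mem_univ 0) habs
    have hXD : ∀ (X : Matrix (Fin (n+1)) (Fin (n+1)) R) i j,
        (X * D) i j = if j ≠ 0 then X i 0 * (c' * B' 0 j) else 0 := by
      intro X i j
      rw [Matrix.mul_apply]
      rw [Finset.sum_eq_single 0]
      · rw [hDapp]
        by_cases hj : j = 0
        · simp [hj]
        · simp [hj]
      · intro k _ hk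
        rw [hDapp, if_neg (by tauto), mul_zero]
      · intro habs; exact absurd (Finset.mem_univ 0) habs
    have hCC : C * C = 0 := by
      ext i j
      rw [hCX]
      by_cases hi : i = 0
      · simp [hi]
      · rw [if_pos hi, hCapp]
        simp
    have hDD : D * D = 0 := by
      ext i j
      rw [hXD]
      by_cases hj : j = 0
      · simp [hj]
      · rw [if_pos hj, hDapp]
        simp
    have hCs : h • C = C := by
      ext i j
      rw [Matrix.smul_apply, hCapp, smul_eq_mul]
      by_cases hcase : j = 0 ∧ i ≠ 0
      · rw [if_pos hcase, ← mul_assoc, hB'e]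
      · rw [if_neg hcase, mul_zero]
    have hDs : h • D = D := by
      ext i j
      rw [Matrix.smul_apply, hDapp, smul_eq_mul]
      by_cases hcase : i = 0 ∧ j ≠ 0
      · rw [if_pos hcase, ← mul_assoc, hhc']
      · rw [if_neg hcase, mul_zero]
    obtain ⟨L, hLdef⟩ : ∃ _x : Matrix (Fin (n+1)) (Fin (n+1)) R, _x = h • 1 - C := ⟨_, rfl⟩
    obtain ⟨L', hL'def⟩ : ∃ _x : Matrix (Fin (n+1)) (Fin (n+1)) R, _x = h • 1 + C := ⟨_, rfl⟩
    obtain ⟨Mm, hMdef⟩ : ∃ _x : Matrix (Fin (n+1)) (Fin (n+1)) R, _x = h • 1 - D := ⟨_, rfl⟩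
    obtain ⟨Mm', hM'def⟩ : ∃ _x : Matrix (Fin (n+1)) (Fin (n+1)) R, _x = h • 1 + D := ⟨_, rfl⟩
    have hone : (h • (1 : Matrix (Fin (n+1)) (Fin (n+1)) R)) * (h • 1) = h • 1 := by
      rw [smul_mul_mat, one_mul, smul_smul, hid]
    have honeC : (h • (1 : Matrix (Fin (n+1)) (Fin (n+1)) R)) * C = C := hsmul_one_mul C hCs
    have hCone : C * (h • (1 : Matrix (Fin (n+1)) (Fin (n+1)) R)) = C := hmul_smul_one C hCs
    have honeD : (h • (1 : Matrix (Fin (n+1)) (Fin (n+1)) R)) * D = D := hsmul_one_mul D hDs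
    have hDone : D * (h • (1 : Matrix (Fin (n+1)) (Fin (n+1)) R)) = D := hmul_smul_one D hDs
    have hLL' : L * L' = h • 1 := by
      rw [hLdef, hL'def, sub_mul, mul_add, mul_add, hone, honeC, hCone, hCC]
      abel
    have hL'L : L' * L = h • 1 := by
      rw [hLdef, hL'def, add_mul, mul_sub, mul_sub, hone, honeC, hCone, hCC]
      abel
    have hMM' : Mm * Mm' = h • 1 := by
      rw [hMdef, hM'def, sub_mul, mul_add, mul_add, hone, honeD, hDone, hDD]
      abel
    have hM'M : Mm' * Mm = h • 1 := by
      rw [hMdef, hM'def, add_mul, mul_sub, mul_sub, hone, honeD, hDone, hDD]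
      abel
    have hLs : h • L = L := by rw [hLdef, smul_sub, smul_smul, hid, hCs]
    have hL's : h • L' = L' := by rw [hL'def, smul_add, smul_smul, hid, hCs]
    have hMs : h • Mm = Mm := by rw [hMdef, smul_sub, smul_smul, hid, hDs]
    have hM's : h • Mm' = Mm' := by rw [hM'def, smul_add, smul_smul, hid, hDs]
    -- B'' and its entries
    obtain ⟨X1, hX1def⟩ : ∃ _x : Matrix (Fin (n+1)) (Fin (n+1)) R, _x = B' * Mm := ⟨_, rfl⟩
    have hX1app : ∀ i j, X1 i j = B' i j - (if j ≠ 0 then B' i 0 * (c' * B' 0 j) else 0) := by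
      intro i j
      rw [hX1def, hMdef, mul_sub, Matrix.sub_apply, hmul_smul_one B' hB's, hXD]
    have hX1s : h • X1 = X1 := by
      rw [hX1def, ← smul_mul_mat, hB's]
    obtain ⟨B'', hB''def⟩ : ∃ _x : Matrix (Fin (n+1)) (Fin (n+1)) R, _x = L * X1 := ⟨_, rfl⟩
    have hB''app : ∀ i j, B'' i j = X1 i j - (if i ≠ 0 then B' i 0 * c' * X1 0 j else 0) := by
      intro i j
      rw [hB''def, hLdef, sub_mul, Matrix.sub_apply, hsmul_one_mul X1 hX1s, hCX]
    have hB''s : h • B'' = B'' := by rw [hB''def, ← smul_mul_mat, hLs]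
    have hX100 : X1 0 0 = c := by
      rw [hX1app, if_neg (fun hyy => hyy rfl), sub_zero, hB'00]
    have hB''00 : B'' 0 0 = c := by
      rw [hB''app, if_neg (fun hyy => hyy rfl), sub_zero, hX100]
    have hB''0succ : ∀ j : Fin n, B'' 0 j.succ = 0 := by
      intro j
      rw [hB''app, if_neg (fun hyy => hyy rfl), sub_zero, hX1app, if_pos (Fin.succ_ne_zero j),
        hB'00, ← mul_assoc, hcc', hB'e, sub_self]
    have hB''succ0 : ∀ i : Fin n, B'' i.succ 0 = 0 := by
      intro i
      rw [hB''app, if_pos (Fin.succ_ne_zero i), hX100, hX1app, if_neg (fun hyy => hyy rfl),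
        sub_zero, mul_assoc, hc'c]
      rw [← hc (B' i.succ 0), hB'e, sub_self]
    -- block structure
    obtain ⟨A₂, hA₂def⟩ : ∃ _x : Matrix (Fin n) (Fin n) R, _x = Matrix.of (fun i j => B'' i.succ j.succ) := ⟨_, rfl⟩
    have hA₂app : ∀ i j, A₂ i j = B'' i.succ j.succ := fun i j => by
      rw [hA₂def]; rfl
    have hA₂s : h • A₂ = A₂ := by
      ext i j
      rw [Matrix.smul_apply, hA₂app, smul_eq_mul]
      have := congrFun (congrFun hB''s i.succ) j.succ
      simpa using this
    have hblk : B'' = blk c A₂ := by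
      ext i j
      induction i using Fin.cases with
      | zero =>
        induction j using Fin.cases with
        | zero => rw [hB''00, blk_00]
        | succ j => rw [hB''0succ, blk_0succ]
      | succ i =>
        induction j using Fin.cases with
        | zero => rw [hB''succ0, blk_succ0]
        | succ j => rw [blk_succsucc, hA₂app]
    obtain ⟨E₂, W₂, W₂', hE₂idem, hE₂s, hW₂s, hW₂'s, hW₂W₂', hW₂'W₂, hA₂dec⟩ :=
      IH h hc hid A₂ hA₂s
    obtain ⟨EB, hEBdef⟩ : ∃ _x : Matrix (Fin (n+1)) (Fin (n+1)) R, _x = blk h E₂ := ⟨_, rfl⟩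
    obtain ⟨WB, hWBdef⟩ : ∃ _x : Matrix (Fin (n+1)) (Fin (n+1)) R, _x = blk c W₂ := ⟨_, rfl⟩
    obtain ⟨WB', hWB'def⟩ : ∃ _x : Matrix (Fin (n+1)) (Fin (n+1)) R, _x = blk c' W₂' := ⟨_, rfl⟩
    have hEBidem : EB * EB = EB := by rw [hEBdef, blk_mul, hid, hE₂idem]
    have hEBs : h • EB = EB := by rw [hEBdef, blk_smul, hid, hE₂s]
    have hWBs : h • WB = WB := by rw [hWBdef, blk_smul, hhc, hW₂s]
    have hWB's : h • WB' = WB' := by rw [hWB'def, blk_smul, hhc', hW₂'s]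
    have hWBWB' : WB * WB' = h • 1 := by
      rw [hWBdef, hWB'def, blk_mul, hcc', hW₂W₂', blk_smul_one]
    have hWB'WB : WB' * WB = h • 1 := by
      rw [hWB'def, hWBdef, blk_mul, hc'c, hW₂'W₂, blk_smul_one]
    have hEBWB : EB * WB = B'' := by
      rw [hEBdef, hWBdef, blk_mul, hhc, ← hA₂dec, hblk]
    -- permutation matrices
    obtain ⟨P, hPdef⟩ : ∃ _x : Matrix (Fin (n+1)) (Fin (n+1)) R, _x = (1 : Matrix _ _ R).submatrix σ id := ⟨_, rfl⟩
    obtain ⟨Q, hQdef⟩ : ∃ _x : Matrix (Fin (n+1)) (Fin (n+1)) R, _x = (1 : Matrix _ _ R).submatrix id τ := ⟨_, rfl⟩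
    have hPP : P * P = 1 := by rw [hPdef, hσ]; exact swap_perm_sq i₀ 0
    have hQQ : Q * Q = 1 := by rw [hQdef, hτ]; exact swap_perm_sq' j₀ 0
    have hPB'Q : P * B' * Q = B := by
      rw [hB'def, hPdef, perm_mul, hQdef, mul_perm]
      ext i j
      simp only [Matrix.submatrix_apply, id_eq, hσ, hτ, Equiv.swap_apply_self]
    -- the conjugating units
    obtain ⟨X, hXdef⟩ : ∃ _x : Matrix (Fin (n+1)) (Fin (n+1)) R, _x = P * L' := ⟨_, rfl⟩
    obtain ⟨X', hX'def⟩ : ∃ _x : Matrix (Fin (n+1)) (Fin (n+1)) R, _x = L * P := ⟨_, rfl⟩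
    obtain ⟨Y, hYdef⟩ : ∃ _x : Matrix (Fin (n+1)) (Fin (n+1)) R, _x = Mm' * Q := ⟨_, rfl⟩
    obtain ⟨Y', hY'def⟩ : ∃ _x : Matrix (Fin (n+1)) (Fin (n+1)) R, _x = Q * Mm := ⟨_, rfl⟩
    have hXs : h • X = X := by rw [hXdef, ← central_mul_smul hc, hL's]
    have hX's : h • X' = X' := by rw [hX'def, ← smul_mul_mat, hLs]
    have hYs : h • Y = Y := by rw [hYdef, ← smul_mul_mat, hM's]
    have hY's : h • Y' = Y' := by rw [hY'def, ← central_mul_smul hc, hMs]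
    have hXX' : X * X' = h • 1 := by
      rw [hXdef, hX'def]
      calc P * L' * (L * P) = P * ((L' * L) * P) := by simp only [mul_assoc]
        _ = P * ((h • 1) * P) := by rw [hL'L]
        _ = P * (h • P) := by rw [smul_mul_mat, one_mul]
        _ = h • (P * P) := by rw [central_mul_smul hc]
        _ = h • 1 := by rw [hPP]
    have hX'X : X' * X = h • 1 := by
      rw [hXdef, hX'def]
      calc L * P * (P * L') = L * ((P * P) * L') := by simp only [mul_assoc]
        _ = L * L' := by rw [hPP, one_mul]
        _ = h • 1 := hLL'
    have hYY' : Y * Y' = h • 1 := by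
      rw [hYdef, hY'def]
      calc Mm' * Q * (Q * Mm) = Mm' * ((Q * Q) * Mm) := by simp only [mul_assoc]
        _ = Mm' * Mm := by rw [hQQ, one_mul]
        _ = h • 1 := hM'M
    have hY'Y : Y' * Y = h • 1 := by
      rw [hYdef, hY'def]
      calc Q * Mm * (Mm' * Q) = Q * ((Mm * Mm') * Q) := by simp only [mul_assoc]
        _ = Q * ((h • 1) * Q) := by rw [hMM']
        _ = Q * (h • Q) := by rw [smul_mul_mat, one_mul]
        _ = h • (Q * Q) := by rw [central_mul_smul hc]
        _ = h • 1 := by rw [hQQ]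
    have hL'B'' : L' * B'' = X1 := by
      rw [hB''def, ← mul_assoc, hL'L, hsmul_one_mul X1 hX1s]
    have hX1M' : X1 * Mm' = B' := by
      rw [hX1def, mul_assoc, hMM', hmul_smul_one B' hB's]
    have hXB''Y : X * B'' * Y = B := by
      rw [hXdef, hYdef]
      calc P * L' * B'' * (Mm' * Q) = P * (((L' * B'') * Mm') * Q) := by simp only [mul_assoc]
        _ = P * ((X1 * Mm') * Q) := by rw [hL'B'']
        _ = P * (B' * Q) := by rw [hX1M']
        _ = P * B' * Q := by rw [mul_assoc]
        _ = B := hPB'Q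
    obtain ⟨E, hEdef⟩ : ∃ _x : Matrix (Fin (n+1)) (Fin (n+1)) R, _x = X * EB * X' := ⟨_, rfl⟩
    obtain ⟨W, hWdef⟩ : ∃ _x : Matrix (Fin (n+1)) (Fin (n+1)) R, _x = X * WB * Y := ⟨_, rfl⟩
    obtain ⟨W', hW'def⟩ : ∃ _x : Matrix (Fin (n+1)) (Fin (n+1)) R, _x = Y' * WB' * X' := ⟨_, rfl⟩
    have hEBX's : h • (EB * X') = EB * X' := by rw [← smul_mul_mat, hEBs]
    have hWB'X's : h • (WB' * X') = WB' * X' := by rw [← smul_mul_mat, hWB's]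
    have hWBYs : h • (WB * Y) = WB * Y := by rw [← smul_mul_mat, hWBs]
    have hEidem : E * E = E := by
      rw [hEdef]
      calc (X * EB * X') * (X * EB * X') = X * (EB * ((X' * X) * (EB * X'))) := by
            simp only [mul_assoc]
        _ = X * (EB * ((h • 1) * (EB * X'))) := by rw [hX'X]
        _ = X * (EB * (EB * X')) := by rw [hsmul_one_mul (EB * X') hEBX's]
        _ = X * ((EB * EB) * X') := by simp only [mul_assoc]
        _ = X * (EB * X') := by rw [hEBidem]
        _ = X * EB * X' := by rw [mul_assoc]
    have hEs : h • E = E := by rw [hEdef, ← smul_mul_mat, ← smul_mul_mat, hXs]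
    have hWs : h • W = W := by rw [hWdef, ← smul_mul_mat, ← smul_mul_mat, hXs]
    have hW's : h • W' = W' := by rw [hW'def, ← smul_mul_mat, ← smul_mul_mat, hY's]
    have hWW' : W * W' = h • 1 := by
      rw [hWdef, hW'def]
      calc (X * WB * Y) * (Y' * WB' * X') = X * (WB * ((Y * Y') * (WB' * X'))) := by
            simp only [mul_assoc]
        _ = X * (WB * ((h • 1) * (WB' * X'))) := by rw [hYY']
        _ = X * (WB * (WB' * X')) := by rw [hsmul_one_mul (WB' * X') hWB'X's]
        _ = X * ((WB * WB') * X') := by simp only [mul_assoc]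
        _ = X * ((h • 1) * X') := by rw [hWBWB']
        _ = X * X' := by rw [hsmul_one_mul X' hX's]
        _ = h • 1 := hXX'
    have hW'W : W' * W = h • 1 := by
      rw [hWdef, hW'def]
      calc (Y' * WB' * X') * (X * WB * Y) = Y' * (WB' * ((X' * X) * (WB * Y))) := by
            simp only [mul_assoc]
        _ = Y' * (WB' * ((h • 1) * (WB * Y))) := by rw [hX'X]
        _ = Y' * (WB' * (WB * Y)) := by rw [hsmul_one_mul (WB * Y) hWBYs]
        _ = Y' * ((WB' * WB) * Y) := by simp only [mul_assoc]
        _ = Y' * ((h • 1) * Y) := by rw [hWB'WB]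
        _ = Y' * Y := by rw [hsmul_one_mul Y hYs]
        _ = h • 1 := hY'Y
    have hEW : E * W = B := by
      rw [hEdef, hWdef]
      calc (X * EB * X') * (X * WB * Y) = X * (EB * ((X' * X) * (WB * Y))) := by
            simp only [mul_assoc]
        _ = X * (EB * ((h • 1) * (WB * Y))) := by rw [hX'X]
        _ = X * (EB * (WB * Y)) := by rw [hsmul_one_mul (WB * Y) hWBYs]
        _ = X * ((EB * WB) * Y) := by simp only [mul_assoc]
        _ = X * (B'' * Y) := by rw [hEBWB]
        _ = X * B'' * Y := by rw [mul_assoc]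
        _ = B := hXB''Y
    exact ⟨E, W, W', hEidem, hEs, hWs, hW's, hWW', hW'W, hEW.symm⟩

end SUNC


namespace SUNC
section AtomE
variable {A : Type*} [CommRing A] {ι : Type*} [Fintype ι] [DecidableEq ι]

def atomE (g : A) (e : ι → A) (S : Finset ι) : A :=
  g * ((∏ p ∈ S, e p) * (∏ p ∈ Finset.univ \ S, (1 - e p)))

lemma atomE_sum (g : A) (e : ι → A) :
    ∑ S ∈ (Finset.univ : Finset ι).powerset, atomE g e S = g := by
  unfold atomE
  rw [← Finset.mul_sum]
  have h0 : ∑ S ∈ (Finset.univ : Finset ι).powerset,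
      (∏ p ∈ S, e p) * (∏ p ∈ Finset.univ \ S, (1 - e p))
      = ∏ p ∈ (Finset.univ : Finset ι), (e p + (1 - e p)) := (Finset.prod_add _ _ _).symm
  rw [h0]
  have h1 : ∀ p ∈ (Finset.univ : Finset ι), e p + (1 - e p) = 1 := by intro p _; ring
  rw [Finset.prod_congr rfl h1, Finset.prod_const_one, mul_one]

lemma atomE_idem {g : A} {e : ι → A} (hg : g * g = g) (he : ∀ p, e p * e p = e p)
    (S : Finset ι) : atomE g e S * atomE g e S = atomE g e S := by
  unfold atomE
  have h1 : (∏ p ∈ S, e p) * (∏ p ∈ S, e p) = ∏ p ∈ S, e p := by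
    rw [← Finset.prod_mul_distrib]; exact Finset.prod_congr rfl (fun p _ => he p)
  have h2 : (∏ p ∈ Finset.univ \ S, (1 - e p)) * (∏ p ∈ Finset.univ \ S, (1 - e p))
      = ∏ p ∈ Finset.univ \ S, (1 - e p) := by
    rw [← Finset.prod_mul_distrib]
    refine Finset.prod_congr rfl (fun p _ => ?_)
    have h3 : (1 - e p) * (1 - e p) = 1 - e p - e p + e p * e p := by ring
    rw [h3, he p]; ring
  calc g * ((∏ p ∈ S, e p) * (∏ p ∈ Finset.univ \ S, (1 - e p)))
        * (g * ((∏ p ∈ S, e p) * (∏ p ∈ Finset.univ \ S, (1 - e p))))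
      = (g * g) * (((∏ p ∈ S, e p) * (∏ p ∈ S, e p)) *
        ((∏ p ∈ Finset.univ \ S, (1 - e p)) * (∏ p ∈ Finset.univ \ S, (1 - e p)))) := by ring
    _ = g * ((∏ p ∈ S, e p) * (∏ p ∈ Finset.univ \ S, (1 - e p))) := by rw [hg, h1, h2]

lemma atomE_ortho_aux {g : A} {e : ι → A} (he : ∀ p, e p * e p = e p)
    {S T : Finset ι} {p : ι} (hpS : p ∈ S) (hpT : p ∉ T) :
    atomE g e S * atomE g e T = 0 := by
  have h1 : ∏ q ∈ S, e q = e p * ∏ q ∈ S.erase p, e q := (Finset.mul_prod_erase S e hpS).symm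
  have hpU : p ∈ Finset.univ \ T := Finset.mem_sdiff.mpr ⟨Finset.mem_univ p, hpT⟩
  have h2 : ∏ q ∈ Finset.univ \ T, (1 - e q)
      = (1 - e p) * ∏ q ∈ (Finset.univ \ T).erase p, (1 - e q) :=
    (Finset.mul_prod_erase _ _ hpU).symm
  have hz : e p * (1 - e p) = 0 := by
    have h3 : e p * (1 - e p) = e p - e p * e p := by ring
    rw [h3, he p, sub_self]
  calc atomE g e S * atomE g e T
      = (e p * (1 - e p)) * ((g * (∏ q ∈ S.erase p, e q) *
          (∏ q ∈ Finset.univ \ S, (1 - e q))) * (g * (∏ q ∈ T, e q) *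
          ∏ q ∈ (Finset.univ \ T).erase p, (1 - e q))) := by
        unfold atomE; rw [h1, h2]; ring
    _ = 0 := by rw [hz, zero_mul]

lemma atomE_ortho {g : A} {e : ι → A} (he : ∀ p, e p * e p = e p)
    {S T : Finset ι} (hST : S ≠ T) : atomE g e S * atomE g e T = 0 := by
  by_cases hsub : ∃ p, p ∈ S ∧ p ∉ T
  · obtain ⟨p, hpS, hpT⟩ := hsub
    exact atomE_ortho_aux he hpS hpT
  · push_neg at hsub
    have hss : S ⊂ T := Finset.ssubset_iff_subset_ne.mpr ⟨fun p hp => hsub p hp, hST⟩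
    obtain ⟨p, hpT, hpS⟩ := Finset.exists_of_ssubset hss
    rw [mul_comm]
    exact atomE_ortho_aux he hpT hpS

lemma atomE_mem {g : A} {e : ι → A} (he : ∀ p, e p * e p = e p)
    {S : Finset ι} {p : ι} (hpS : p ∈ S) : atomE g e S * e p = atomE g e S := by
  have h1 : ∏ q ∈ S, e q = e p * ∏ q ∈ S.erase p, e q := (Finset.mul_prod_erase S e hpS).symm
  have h4 : atomE g e S * e p = g * (((e p * e p) * ∏ q ∈ S.erase p, e q) *
      ∏ q ∈ Finset.univ \ S, (1 - e q)) := by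
    unfold atomE; rw [h1]; ring
  rw [h4, he p]
  unfold atomE; rw [h1]

lemma atomE_notmem {g : A} {e : ι → A} (he : ∀ p, e p * e p = e p)
    {S : Finset ι} {p : ι} (hpS : p ∉ S) : atomE g e S * e p = 0 := by
  have hpU : p ∈ Finset.univ \ S := Finset.mem_sdiff.mpr ⟨Finset.mem_univ p, hpS⟩
  have h2 : ∏ q ∈ Finset.univ \ S, (1 - e q)
      = (1 - e p) * ∏ q ∈ (Finset.univ \ S).erase p, (1 - e q) :=
    (Finset.mul_prod_erase _ _ hpU).symm
  have hz : (1 - e p) * e p = 0 := by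
    have h3 : (1 - e p) * e p = e p - e p * e p := by ring
    rw [h3, he p, sub_self]
  have h4 : atomE g e S * e p = ((1 - e p) * e p) * (g * (∏ q ∈ S, e q) *
      ∏ q ∈ (Finset.univ \ S).erase p, (1 - e q)) := by
    unfold atomE; rw [h2]; ring
  rw [h4, hz, zero_mul]

lemma atomE_g {g : A} {e : ι → A} (hg : g * g = g) (S : Finset ι) :
    g * atomE g e S = atomE g e S := by
  unfold atomE; rw [← mul_assoc, hg]

end AtomE
end SUNC

namespace SUNC
section Claims
variable {R : Type*} [Ring R] {n : ℕ}

lemma claim_zero : Claim R 0 := by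
  intro g hgc hgid A hgA
  have hall : ∀ X Y : Matrix (Fin 0) (Fin 0) R, X = Y := by
    intro X Y; ext i j; exact i.elim0
  exact ⟨0, 0, 0, hall _ _, hall _ _, hall _ _, hall _ _, hall _ _, hall _ _, hall _ _⟩

lemma claim_succ [IsReduced R] (hur : UnitRegular R) (IH : Claim R n) : Claim R (n+1) := by
  classical
  intro g hgc hgid A hgA
  have hdec : ∀ p : Fin (n+1) × Fin (n+1), ∃ (ecp : R) (vp : Rˣ),
      ecp * ecp = ecp ∧ (∀ r, ecp * r = r * ecp) ∧ A p.1 p.2 = ecp * ↑vp := by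
    intro p
    obtain ⟨u, hu⟩ := hur (A p.1 p.2)
    have hidem : (A p.1 p.2 * ↑u) * (A p.1 p.2 * ↑u) = A p.1 p.2 * ↑u := by
      calc (A p.1 p.2 * ↑u) * (A p.1 p.2 * ↑u) = (A p.1 p.2 * ↑u * A p.1 p.2) * ↑u := by
            noncomm_ring
        _ = A p.1 p.2 * ↑u := by rw [← hu]
    exact ⟨A p.1 p.2 * ↑u, u⁻¹, hidem, idem_central hidem,
      by rw [mul_assoc, Units.mul_inv, mul_one]⟩
  choose ec v hecidem heccen hAp using hdec
  have hAp' : ∀ i j, A i j = ec (i, j) * ↑(v (i, j)) := fun i j => hAp (i, j)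
  obtain ⟨gz, hgzdef⟩ : ∃ _x : Subring.center R,
      _x = ⟨g, Subring.mem_center_iff.mpr (fun r => (hgc r).symm)⟩ := ⟨_, rfl⟩
  obtain ⟨ez, hezdef⟩ : ∃ _x : (Fin (n+1) × Fin (n+1)) → Subring.center R,
      _x = fun p => ⟨ec p, Subring.mem_center_iff.mpr (fun r => (heccen p r).symm)⟩ := ⟨_, rfl⟩
  have hgzval : (gz : R) = g := by rw [hgzdef]
  have hezval : ∀ p, (ez p : R) = ec p := by intro p; rw [hezdef]
  have hgzid : gz * gz = gz := by
    apply Subtype.ext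
    show (gz : R) * (gz : R) = (gz : R)
    rw [hgzval]; exact hgid
  have hezid : ∀ p, ez p * ez p = ez p := by
    intro p
    apply Subtype.ext
    show (ez p : R) * (ez p : R) = (ez p : R)
    rw [hezval]; exact hecidem p
  obtain ⟨gs, hgsdef⟩ : ∃ _x : Finset (Fin (n+1) × Fin (n+1)) → R,
      _x = fun S => ↑(atomE gz ez S) := ⟨_, rfl⟩
  have hgsval : ∀ S, gs S = ↑(atomE gz ez S) := by intro S; rw [hgsdef]
  have hgsc : ∀ S r, gs S * r = r * gs S := by
    intro S r
    rw [hgsval]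
    exact ((Subring.mem_center_iff.mp (atomE gz ez S).2) r).symm
  have hgsid : ∀ S, gs S * gs S = gs S := by
    intro S
    have h0 := congrArg Subtype.val (atomE_idem hgzid hezid S)
    rw [hgsval]
    simpa using h0
  have hgsortho : ∀ S T, S ≠ T → gs S * gs T = 0 := by
    intro S T hST
    have h0 := congrArg Subtype.val (atomE_ortho (g := gz) hezid hST)
    rw [hgsval, hgsval]
    simpa using h0
  have hgsmem : ∀ S p, p ∈ S → gs S * ec p = gs S := by
    intro S p hp
    have h0 := congrArg Subtype.val (atomE_mem (g := gz) hezid hp)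
    rw [hgsval, ← hezval p]
    simpa using h0
  have hgsnot : ∀ S p, p ∉ S → gs S * ec p = 0 := by
    intro S p hp
    have h0 := congrArg Subtype.val (atomE_notmem (g := gz) hezid hp)
    rw [hgsval, ← hezval p]
    simpa using h0
  have hgsg : ∀ S, g * gs S = gs S := by
    intro S
    have h0 := congrArg Subtype.val (atomE_g (e := ez) hgzid S)
    rw [hgsval, ← hgzval]
    simpa using h0
  have hgssum : ∑ S ∈ (Finset.univ : Finset (Fin (n+1) × Fin (n+1))).powerset, gs S = g := by
    have h0 := congrArg Subtype.val (atomE_sum gz ez)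
    rw [← hgzval]
    calc ∑ S ∈ (Finset.univ : Finset (Fin (n+1) × Fin (n+1))).powerset, gs S
        = ∑ S ∈ (Finset.univ : Finset (Fin (n+1) × Fin (n+1))).powerset,
            ((atomE gz ez S : Subring.center R) : R) := by
          exact Finset.sum_congr rfl (fun S _ => hgsval S)
      _ = ((∑ S ∈ (Finset.univ : Finset (Fin (n+1) × Fin (n+1))).powerset,
            atomE gz ez S : Subring.center R) : R) := by
          norm_cast
      _ = (gz : R) := by rw [atomE_sum gz ez]
  have hact : ∀ S : Finset (Fin (n+1) × Fin (n+1)),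
      ∃ E W W' : Matrix (Fin (n+1)) (Fin (n+1)) R,
        E * E = E ∧ gs S • E = E ∧ gs S • W = W ∧ gs S • W' = W' ∧
        W * W' = gs S • 1 ∧ W' * W = gs S • 1 ∧ gs S • A = E * W := by
    intro S
    apply atom_step (gs S) (hgsc S) (hgsid S) IH
    · rw [smul_smul, hgsid]
    · intro i j
      by_cases hp : (i, j) ∈ S
      · right
        refine ⟨v (i, j), ?_⟩
        rw [Matrix.smul_apply, smul_eq_mul, hAp' i j, ← mul_assoc, hgsmem S _ hp]
      · left
        rw [Matrix.smul_apply, smul_eq_mul, hAp' i j, ← mul_assoc, hgsnot S _ hp, zero_mul]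
  choose ES WS WS' hE1 hE2 hW2 hW'2 hWW' hW'W hEW using hact
  have horthokill : ∀ S T, S ≠ T → ∀ (U V : Matrix (Fin (n+1)) (Fin (n+1)) R),
      gs S • U = U → gs T • V = V → U * V = 0 := by
    intro S T hST U V hU hV
    calc U * V = (gs S • U) * (gs T • V) := by rw [hU, hV]
      _ = gs S • (U * (gs T • V)) := by rw [smul_mul_mat]
      _ = gs S • (gs T • (U * V)) := by rw [central_mul_smul (hgsc T)]
      _ = (gs S * gs T) • (U * V) := by rw [smul_smul]
      _ = 0 := by rw [hgsortho S T hST, zero_smul]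
  have hdiag : ∀ (F G : Finset (Fin (n+1) × Fin (n+1)) → Matrix (Fin (n+1)) (Fin (n+1)) R),
      (∀ S, gs S • F S = F S) → (∀ S, gs S • G S = G S) →
      (∑ S ∈ (Finset.univ : Finset (Fin (n+1) × Fin (n+1))).powerset, F S) *
        (∑ T ∈ (Finset.univ : Finset (Fin (n+1) × Fin (n+1))).powerset, G T) =
        ∑ S ∈ (Finset.univ : Finset (Fin (n+1) × Fin (n+1))).powerset, F S * G S := by
    intro F G hF hG
    rw [Finset.sum_mul]
    refine Finset.sum_congr rfl (fun S hS => ?_)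
    rw [Finset.mul_sum]
    rw [Finset.sum_eq_single S]
    · intro T _ hTS
      exact horthokill S T (Ne.symm hTS) (F S) (G T) (hF S) (hG T)
    · intro habs
      exact absurd (Finset.mem_powerset.mpr (Finset.subset_univ S)) habs
  have habsorbg : ∀ (F : Finset (Fin (n+1) × Fin (n+1)) → Matrix (Fin (n+1)) (Fin (n+1)) R),
      (∀ S, gs S • F S = F S) →
      g • (∑ S ∈ (Finset.univ : Finset (Fin (n+1) × Fin (n+1))).powerset, F S) =
        ∑ S ∈ (Finset.univ : Finset (Fin (n+1) × Fin (n+1))).powerset, F S := by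
    intro F hF
    rw [Finset.smul_sum]
    refine Finset.sum_congr rfl (fun S _ => ?_)
    calc g • F S = g • (gs S • F S) := by rw [hF S]
      _ = (g * gs S) • F S := by rw [smul_smul]
      _ = gs S • F S := by rw [hgsg S]
      _ = F S := hF S
  refine ⟨∑ S ∈ (Finset.univ : Finset (Fin (n+1) × Fin (n+1))).powerset, ES S,
    ∑ S ∈ (Finset.univ : Finset (Fin (n+1) × Fin (n+1))).powerset, WS S,
    ∑ S ∈ (Finset.univ : Finset (Fin (n+1) × Fin (n+1))).powerset, WS' S,
    ?_, ?_, ?_, ?_, ?_, ?_, ?_⟩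
  · rw [hdiag ES ES hE2 hE2]
    exact Finset.sum_congr rfl (fun S _ => hE1 S)
  · exact habsorbg ES hE2
  · exact habsorbg WS hW2
  · exact habsorbg WS' hW'2
  · rw [hdiag WS WS' hW2 hW'2]
    calc ∑ S ∈ (Finset.univ : Finset (Fin (n+1) × Fin (n+1))).powerset, WS S * WS' S
        = ∑ S ∈ (Finset.univ : Finset (Fin (n+1) × Fin (n+1))).powerset, gs S • (1 :
            Matrix (Fin (n+1)) (Fin (n+1)) R) := Finset.sum_congr rfl (fun S _ => hWW' S)
      _ = (∑ S ∈ (Finset.univ : Finset (Fin (n+1) × Fin (n+1))).powerset, gs S) • (1 :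
            Matrix (Fin (n+1)) (Fin (n+1)) R) := by rw [Finset.sum_smul]
      _ = g • 1 := by rw [hgssum]
  · rw [hdiag WS' WS hW'2 hW2]
    calc ∑ S ∈ (Finset.univ : Finset (Fin (n+1) × Fin (n+1))).powerset, WS' S * WS S
        = ∑ S ∈ (Finset.univ : Finset (Fin (n+1) × Fin (n+1))).powerset, gs S • (1 :
            Matrix (Fin (n+1)) (Fin (n+1)) R) := Finset.sum_congr rfl (fun S _ => hW'W S)
      _ = (∑ S ∈ (Finset.univ : Finset (Fin (n+1) × Fin (n+1))).powerset, gs S) • (1 :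
            Matrix (Fin (n+1)) (Fin (n+1)) R) := by rw [Finset.sum_smul]
      _ = g • 1 := by rw [hgssum]
  · rw [hdiag ES WS hE2 hW2]
    calc A = g • A := hgA.symm
      _ = (∑ S ∈ (Finset.univ : Finset (Fin (n+1) × Fin (n+1))).powerset, gs S) • A := by
          rw [hgssum]
      _ = ∑ S ∈ (Finset.univ : Finset (Fin (n+1) × Fin (n+1))).powerset, gs S • A := by
          rw [Finset.sum_smul]
      _ = ∑ S ∈ (Finset.univ : Finset (Fin (n+1) × Fin (n+1))).powerset, ES S * WS S :=
          Finset.sum_congr rfl (fun S _ => hEW S)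

lemma diag_claim [IsReduced R] (hur : UnitRegular R) : ∀ m, Claim R m
  | 0 => claim_zero
  | (m+1) => claim_succ hur (diag_claim hur m)

lemma sunc_of_unit_regular [IsReduced R] (hur : UnitRegular R) (m : ℕ) :
    StronglyUnitNilClean (Matrix (Fin m) (Fin m) R) := by
  intro A
  obtain ⟨E, W, W', hEE, _, _, _, hWW', hW'W, hAEW⟩ :=
    diag_claim hur m 1 (fun r => by rw [one_mul, mul_one]) (mul_one 1) A (one_smul R A)
  rw [one_smul] at hWW' hW'W
  refine ⟨⟨W', W, hW'W, hWW'⟩, W' * (E * W), 0, ?_, ⟨1, pow_one 0⟩, ?_, ?_⟩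
  · show (W' * (E * W)) * (W' * (E * W)) = W' * (E * W)
    calc (W' * (E * W)) * (W' * (E * W)) = W' * (E * ((W * W') * (E * W))) := by
          simp only [mul_assoc]
      _ = W' * (E * (E * W)) := by rw [hWW', one_mul]
      _ = W' * ((E * E) * W) := by simp only [mul_assoc]
      _ = W' * (E * W) := by rw [hEE]
  · rw [mul_zero, zero_mul]
  · show W' * A = W' * (E * W) + 0
    rw [add_zero, hAEW]

end Claims
end SUNC

theorem matrix_stronglyUnitNilClean_iff_unitRegular_of_reduced
    (R : Type*) [Ring R] [IsReduced R] (n : ℕ) (hn : 1 ≤ n) :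
    StronglyUnitNilClean (Matrix (Fin n) (Fin n) R) ↔ UnitRegular R := by
  constructor
  · intro hs a
    obtain ⟨u, e, b, he, hb, hcomm, heq⟩ :=
      hs (Matrix.diagonal (fun i => if i = (⟨0, hn⟩ : Fin n) then a else 1))
    obtain ⟨x, hx⟩ := regular_of_sunc hn a ⟨u, e, b, he, hb, hcomm, heq⟩
    exact unit_regular_of_regular hx
  · intro hur
    exact SUNC.sunc_of_unit_regular hur n
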